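/- Suppose Q, X ∈ ℝ satisfy α·(μ − X²) + β·Q²/2 = 0. Then the curve (q1, p1, q2, p2)(t) = (Q·cos((1+βX)·t), −Q·sin((1+βX)·t), X, 0) is an exact solution of the 0²iω model system; if 1 + βX ≠ 0 it is periodic with period 2π/|1+βX|. (This is the family of short-periodic orbits, whose amplitudes satisfy the conic relation X² − (β/(2α))·Q² = μ.) -/

import Mathlib

/-- The vector field of the `0²iω` model system, in coordinates
`(q₁, p₁, q₂, p₂) = (y 0, y 1, y 2, y 3)`. -/
noncomputable def F02 (α β μ : ℝ) (y : Fin 4 → ℝ) : Fin 4 → ℝ :=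
  ![(1 + β * y 2) * y 1,
    -((1 + β * y 2) * y 0),
    α * y 3,
    -(α * (μ - (y 2) ^ 2)) - β * ((y 0) ^ 2 + (y 1) ^ 2) / 2]

/-- The short-periodic family: if `α(μ − X²) + βQ²/2 = 0` then
`(q₁,p₁,q₂,p₂)(t) = (Q cos((1+βX)t), −Q sin((1+βX)t), X, 0)` is an exact solution
of the `0²iω` system, its amplitudes satisfy the conic relation
`X² − (β/(2α))Q² = μ`, and it is periodic with period `2π/|1+βX|` when `1+βX ≠ 0`. -/
theorem zero2iw_short_periodic_orbits (α β μ Q X : ℝ) (hα : 0 < α)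
    (hQX : α * (μ - X ^ 2) + β * Q ^ 2 / 2 = 0) :
    (∀ t : ℝ,
      HasDerivAt
        (fun s : ℝ => (![Q * Real.cos ((1 + β * X) * s),
          -(Q * Real.sin ((1 + β * X) * s)), X, 0] : Fin 4 → ℝ))
        (F02 α β μ ![Q * Real.cos ((1 + β * X) * t),
          -(Q * Real.sin ((1 + β * X) * t)), X, 0]) t) ∧
    X ^ 2 - (β / (2 * α)) * Q ^ 2 = μ ∧
    (1 + β * X ≠ 0 →
      Function.Periodic
        (fun s : ℝ => (![Q * Real.cos ((1 + β * X) * s),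
          -(Q * Real.sin ((1 + β * X) * s)), X, 0] : Fin 4 → ℝ))
        (2 * Real.pi / |1 + β * X|)) := by
  set ω := 1 + β * X with hω
  refine ⟨?_, ?_, ?_⟩
  · intro t
    rw [hasDerivAt_pi]
    intro i
    have hc : HasDerivAt (fun s : ℝ => Real.cos (ω * s)) (-(ω * Real.sin (ω * t))) t := by
      have := (Real.hasDerivAt_cos (ω * t)).comp t ((hasDerivAt_id t).const_mul ω)
      simpa [Function.comp_def, mul_comm] using this
    have hs : HasDerivAt (fun s : ℝ => Real.sin (ω * s)) (ω * Real.cos (ω * t)) t := by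
      have := (Real.hasDerivAt_sin (ω * t)).comp t ((hasDerivAt_id t).const_mul ω)
      simpa [Function.comp_def, mul_comm] using this
    fin_cases i
    · simpa [F02, mul_comm, mul_left_comm, mul_assoc] using hc.const_mul Q
    · have := (hs.const_mul Q).neg
      simp only [F02]
      norm_num
      rw [show (![Q * Real.cos (ω * t), -(Q * Real.sin (ω * t)), X, 0] : Fin 4 → ℝ) 2 = X from rfl]
      convert this using 1
      · rfl
      · rw [hω]; ring
    · simpa [F02] using hasDerivAt_const t X
    · have h4 : -(α * (μ - X ^ 2)) -
          β * ((Q * Real.cos (ω * t)) ^ 2 + (-(Q * Real.sin (ω * t))) ^ 2) / 2 = 0 := by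
        have hpy : (Real.cos (ω * t)) ^ 2 + (Real.sin (ω * t)) ^ 2 = 1 :=
          Real.cos_sq_add_sin_sq _
      
        have : (Q * Real.cos (ω * t)) ^ 2 + (-(Q * Real.sin (ω * t))) ^ 2 = Q ^ 2 := by
          nlinarith [hpy]
        rw [this]; linarith
      simp only [F02]
      norm_num
      rw [show (![Q * Real.cos (ω * t), -(Q * Real.sin (ω * t)), X, 0] : Fin 4 → ℝ) 2 = X from rfl]
      norm_num at h4
      rw [h4]
      exact hasDerivAt_const t 0
  · have hαne : α ≠ 0 := ne_of_gt hα
    field_simp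
    nlinarith [hQX]
  · intro hne
    intro s
    have hT : ω * (2 * Real.pi / |ω|) = 2 * Real.pi ∨
        ω * (2 * Real.pi / |ω|) = -(2 * Real.pi) := by
      rcases abs_cases ω with ⟨h1, _⟩ | ⟨h1, _⟩
      · left; rw [h1]; field_simp
      · right
        rw [h1, div_neg, mul_neg, neg_inj, ← mul_div_assoc, mul_div_cancel_left₀ _ hne]

    funext i
    have hcos : Real.cos (ω * (s + 2 * Real.pi / |ω|)) = Real.cos (ω * s) := by
      rw [mul_add]
      rcases hT with h | h <;> rw [h] <;>
        simp [Real.cos_add, Real.cos_two_pi, Real.sin_two_pi]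
    have hsin : Real.sin (ω * (s + 2 * Real.pi / |ω|)) = Real.sin (ω * s) := by
      rw [mul_add]
      rcases hT with h | h <;> rw [h] <;>
        simp [Real.sin_add, Real.cos_two_pi, Real.sin_two_pi]
    fin_cases i <;> simp [hcos, hsin]
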